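/- If D is a derivation in the natural deduction system NLT_ω whose set of open assumptions is Γ and whose end-formula is β, then the sequent Γ ⇒ β is derivable in SLT_ω. -/
import Mathlib


/-- Formulas of until-free propositional LTL: propositional variables (indexed by ℕ),
implication, negation, conjunction, disjunction, G (globally), F (eventually), X (next). -/
inductive Formula : Type
  | var : ℕ → Formula
  | imp : Formula → Formula → Formula
  | neg : Formula → Formula
  | and : Formula → Formula → Formula
  | or  : Formula → Formula → Formula
  | G   : Formula → Formula
  | F   : Formula → Formula
  | X   : Formula → Formula
deriving DecidableEq

/-- `Xpow i α` is `X^i α`: `X^0 α = α`, `X^{n+1} α = X^n (X α)`. -/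
def Xpow : ℕ → Formula → Formula
  | 0, α => α
  | n + 1, α => Xpow n (Formula.X α)

/-- Natural deduction derivations of NLT_ω. `ND Γ β` is the type of derivations with
set of open assumptions `Γ` and end-formula `β`. Discharge of assumptions (possibly
vacuous) is modelled by removing the discharged formula from the assumption set. -/
inductive ND : Set Formula → Formula → Type
  | hyp (α : Formula) : ND {α} α
  | impI (Γ : Set Formula) (i : ℕ) (α β : Formula) :
      ND Γ (Xpow i β) → ND (Γ \ {Xpow i α}) (Xpow i (Formula.imp α β))
  | impE (Γ₁ Γ₂ : Set Formula) (i : ℕ) (α β : Formula) :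
      ND Γ₁ (Xpow i (Formula.imp α β)) → ND Γ₂ (Xpow i α) → ND (Γ₁ ∪ Γ₂) (Xpow i β)
  | exp (Γ₁ Γ₂ : Set Formula) (i : ℕ) (α γ : Formula) :
      ND Γ₁ (Xpow i (Formula.neg α)) → ND Γ₂ (Xpow i α) → ND (Γ₁ ∪ Γ₂) γ
  | exm (Γ₁ Γ₂ : Set Formula) (i : ℕ) (α γ : Formula) :
      ND Γ₁ γ → ND Γ₂ γ →
      ND ((Γ₁ \ {Xpow i (Formula.neg α)}) ∪ (Γ₂ \ {Xpow i α})) γ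
  | negI (Γ₁ Γ₂ : Set Formula) (i j : ℕ) (α γ : Formula) :
      ND Γ₁ (Xpow j (Formula.neg γ)) → ND Γ₂ (Xpow j γ) →
      ND ((Γ₁ \ {Xpow i α}) ∪ (Γ₂ \ {Xpow i α})) (Xpow i (Formula.neg α))
  | andI (Γ₁ Γ₂ : Set Formula) (i : ℕ) (α β : Formula) :
      ND Γ₁ (Xpow i α) → ND Γ₂ (Xpow i β) → ND (Γ₁ ∪ Γ₂) (Xpow i (Formula.and α β))
  | andE1 (Γ : Set Formula) (i : ℕ) (α β : Formula) :
      ND Γ (Xpow i (Formula.and α β)) → ND Γ (Xpow i α)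
  | andE2 (Γ : Set Formula) (i : ℕ) (α β : Formula) :
      ND Γ (Xpow i (Formula.and α β)) → ND Γ (Xpow i β)
  | orI1 (Γ : Set Formula) (i : ℕ) (α β : Formula) :
      ND Γ (Xpow i α) → ND Γ (Xpow i (Formula.or α β))
  | orI2 (Γ : Set Formula) (i : ℕ) (α β : Formula) :
      ND Γ (Xpow i β) → ND Γ (Xpow i (Formula.or α β))
  | orE (Γ₀ Γ₁ Γ₂ : Set Formula) (i : ℕ) (α β γ : Formula) :
      ND Γ₀ (Xpow i (Formula.or α β)) → ND Γ₁ γ → ND Γ₂ γ →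
      ND (Γ₀ ∪ (Γ₁ \ {Xpow i α}) ∪ (Γ₂ \ {Xpow i β})) γ
  | GI (Γs : ℕ → Set Formula) (i : ℕ) (α : Formula) :
      (∀ j : ℕ, ND (Γs j) (Xpow (i + j) α)) → ND (⋃ j, Γs j) (Xpow i (Formula.G α))
  | GE (Γ : Set Formula) (i k : ℕ) (α : Formula) :
      ND Γ (Xpow i (Formula.G α)) → ND Γ (Xpow (i + k) α)
  | FI (Γ : Set Formula) (i k : ℕ) (α : Formula) :
      ND Γ (Xpow (i + k) α) → ND Γ (Xpow i (Formula.F α))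
  | FE (Γ₀ : Set Formula) (Γs : ℕ → Set Formula) (i : ℕ) (α γ : Formula) :
      ND Γ₀ (Xpow i (Formula.F α)) → (∀ j : ℕ, ND (Γs j) γ) →
      ND (Γ₀ ∪ ⋃ j, (Γs j \ {Xpow (i + j) α})) γ

/-- The single-succedent sequent calculus SLT_ω on sequents `Γ ⇒ γ` where `Γ` is a finite
set of formulas and `γ` is a formula (`some γ`) or empty (`none`). The boolean parameter
records whether the rule (cut) is allowed: `SLT true` is full SLT_ω, `SLT false` is
cut-free SLT_ω. -/
inductive SLT : Bool → Finset Formula → Option Formula → Prop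
  | id (c : Bool) (i p : ℕ) (Γ : Finset Formula) :
      SLT c (insert (Xpow i (Formula.var p)) Γ) (some (Xpow i (Formula.var p)))
  | cut {c : Bool} {Γ Θ : Finset Formula} {α : Formula} {γ : Option Formula} :
      c = true → SLT c Γ (some α) → SLT c (insert α Θ) γ → SLT c (Γ ∪ Θ) γ
  | weR {c : Bool} {Γ : Finset Formula} (α : Formula) :
      SLT c Γ none → SLT c Γ (some α)
  | impL {c : Bool} {Γ : Finset Formula} {γ : Option Formula} (i : ℕ) (α β : Formula) :
      SLT c Γ (some (Xpow i α)) → SLT c (insert (Xpow i β) Γ) γ →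
      SLT c (insert (Xpow i (Formula.imp α β)) Γ) γ
  | impR {c : Bool} {Γ : Finset Formula} (i : ℕ) (α β : Formula) :
      SLT c (insert (Xpow i α) Γ) (some (Xpow i β)) →
      SLT c Γ (some (Xpow i (Formula.imp α β)))
  | negL {c : Bool} {Γ : Finset Formula} (i : ℕ) (α : Formula) :
      SLT c Γ (some (Xpow i α)) → SLT c (insert (Xpow i (Formula.neg α)) Γ) none
  | negR {c : Bool} {Γ : Finset Formula} (i : ℕ) (α : Formula) :
      SLT c (insert (Xpow i α) Γ) none → SLT c Γ (some (Xpow i (Formula.neg α)))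
  | exM {c : Bool} {Γ : Finset Formula} {γ : Option Formula} (i : ℕ) (α : Formula) :
      SLT c (insert (Xpow i (Formula.neg α)) Γ) γ → SLT c (insert (Xpow i α) Γ) γ →
      SLT c Γ γ
  | andL {c : Bool} {Γ : Finset Formula} {γ : Option Formula} (i : ℕ) (α β : Formula) :
      SLT c (insert (Xpow i α) (insert (Xpow i β) Γ)) γ →
      SLT c (insert (Xpow i (Formula.and α β)) Γ) γ
  | andR {c : Bool} {Γ : Finset Formula} (i : ℕ) (α β : Formula) :
      SLT c Γ (some (Xpow i α)) → SLT c Γ (some (Xpow i β)) →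
      SLT c Γ (some (Xpow i (Formula.and α β)))
  | orL {c : Bool} {Γ : Finset Formula} {γ : Option Formula} (i : ℕ) (α β : Formula) :
      SLT c (insert (Xpow i α) Γ) γ → SLT c (insert (Xpow i β) Γ) γ →
      SLT c (insert (Xpow i (Formula.or α β)) Γ) γ
  | orR1 {c : Bool} {Γ : Finset Formula} (i : ℕ) (α β : Formula) :
      SLT c Γ (some (Xpow i α)) → SLT c Γ (some (Xpow i (Formula.or α β)))
  | orR2 {c : Bool} {Γ : Finset Formula} (i : ℕ) (α β : Formula) :
      SLT c Γ (some (Xpow i β)) → SLT c Γ (some (Xpow i (Formula.or α β)))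
  | GL {c : Bool} {Γ : Finset Formula} {γ : Option Formula} (i k : ℕ) (α : Formula) :
      SLT c (insert (Xpow (i + k) α) Γ) γ → SLT c (insert (Xpow i (Formula.G α)) Γ) γ
  | GR {c : Bool} {Γ : Finset Formula} (i : ℕ) (α : Formula) :
      (∀ j : ℕ, SLT c Γ (some (Xpow (i + j) α))) → SLT c Γ (some (Xpow i (Formula.G α)))
  | FL {c : Bool} {Γ : Finset Formula} {γ : Option Formula} (i : ℕ) (α : Formula) :
      (∀ j : ℕ, SLT c (insert (Xpow (i + j) α) Γ) γ) →
      SLT c (insert (Xpow i (Formula.F α)) Γ) γ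
  | FR {c : Bool} {Γ : Finset Formula} (i k : ℕ) (α : Formula) :
      SLT c Γ (some (Xpow (i + k) α)) → SLT c Γ (some (Xpow i (Formula.F α)))


lemma slt_ax : ∀ (α : Formula) (i : ℕ) (Γ : Finset Formula) (c : Bool),
    SLT c (insert (Xpow i α) Γ) (some (Xpow i α))
  | Formula.var p, i, Γ, c => SLT.id c i p Γ
  | Formula.imp α β, i, Γ, c => by
      apply SLT.impR
      rw [Finset.insert_comm]
      exact SLT.impL i α β (slt_ax α i _ c) (slt_ax β i _ c)
  | Formula.neg α, i, Γ, c => by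
      apply SLT.negR
      rw [Finset.insert_comm]
      exact SLT.negL i α (slt_ax α i _ c)
  | Formula.and α β, i, Γ, c => by
      apply SLT.andR
      · exact SLT.andL i α β (slt_ax α i _ c)
      · exact SLT.andL i α β (by rw [Finset.insert_comm]; exact slt_ax β i _ c)
  | Formula.or α β, i, Γ, c => by
      exact SLT.orL i α β (SLT.orR1 i α β (slt_ax α i _ c))
        (SLT.orR2 i α β (slt_ax β i _ c))
  | Formula.G α, i, Γ, c =>
      SLT.GR i α (fun j => SLT.GL i j α (slt_ax α (i + j) Γ c))
  | Formula.F α, i, Γ, c =>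
      SLT.FL i α (fun j => SLT.FR i j α (slt_ax α (i + j) Γ c))
  | Formula.X α, i, Γ, c => slt_ax α (i + 1) Γ c

lemma nd_to_slt {Γs : Set Formula} {β : Formula} (D : ND Γs β) :
    ∀ Δ : Finset Formula, Γs ⊆ ↑Δ → SLT true Δ (some β) := by
  induction D with
  | hyp α =>
    intro Δ h
    have hα : α ∈ Δ := h rfl
    have := slt_ax α 0 Δ true
    simpa [Xpow, Finset.insert_eq_self.mpr hα] using this
  | impI Γ i α β D ih =>
    intro Δ h
    apply SLT.impR
    apply ih
    intro x hx
    by_cases hxa : x = Xpow i α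
    · simp [hxa]
    · have := h ⟨hx, hxa⟩
      simp_all
  | impE Γ₁ Γ₂ i α β D1 D2 ih1 ih2 =>
    intro Δ h
    have h1 := ih1 Δ (fun x hx => h (Or.inl hx))
    have h2 := ih2 Δ (fun x hx => h (Or.inr hx))
    have := SLT.cut rfl h1 (SLT.impL i α β h2 (slt_ax β i Δ true))
    rwa [Finset.union_self] at this
  | exp Γ₁ Γ₂ i α γ D1 D2 ih1 ih2 =>
    intro Δ h
    have h1 := ih1 Δ (fun x hx => h (Or.inl hx))
    have h2 := ih2 Δ (fun x hx => h (Or.inr hx))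
    have := SLT.cut rfl h1 (SLT.weR γ (SLT.negL i α h2))
    rwa [Finset.union_self] at this
  | exm Γ₁ Γ₂ i α γ D1 D2 ih1 ih2 =>
    intro Δ h
    apply SLT.exM i α
    · apply ih1
      intro x hx
      by_cases hxa : x = Xpow i (Formula.neg α)
      · simp [hxa]
      · have := h (Or.inl ⟨hx, hxa⟩); simp_all
    · apply ih2
      intro x hx
      by_cases hxa : x = Xpow i α
      · simp [hxa]
      · have := h (Or.inr ⟨hx, hxa⟩); simp_all
  | negI Γ₁ Γ₂ i j α γ D1 D2 ih1 ih2 =>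
    intro Δ h
    apply SLT.negR
    have sub1 : Γ₁ ⊆ ↑(insert (Xpow i α) Δ) := by
      intro x hx
      by_cases hxa : x = Xpow i α
      · simp [hxa]
      · have := h (Or.inl ⟨hx, hxa⟩); simp_all
    have sub2 : Γ₂ ⊆ ↑(insert (Xpow i α) Δ) := by
      intro x hx
      by_cases hxa : x = Xpow i α
      · simp [hxa]
      · have := h (Or.inr ⟨hx, hxa⟩); simp_all
    have p1 := ih1 _ sub1
    have p2 := ih2 _ sub2
    have := SLT.cut rfl p1 (SLT.negL j γ p2)
    rwa [Finset.union_self] at this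
  | andI Γ₁ Γ₂ i α β D1 D2 ih1 ih2 =>
    intro Δ h
    exact SLT.andR i α β (ih1 Δ (fun x hx => h (Or.inl hx)))
      (ih2 Δ (fun x hx => h (Or.inr hx)))
  | andE1 Γ i α β D ih =>
    intro Δ h
    have := SLT.cut rfl (ih Δ h)
      (SLT.andL i α β (slt_ax α i (insert (Xpow i β) Δ) true))
    rwa [Finset.union_self] at this
  | andE2 Γ i α β D ih =>
    intro Δ h
    have := SLT.cut rfl (ih Δ h)
      (SLT.andL i α β (by rw [Finset.insert_comm]; exact slt_ax β i (insert (Xpow i α) Δ) true))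
    rwa [Finset.union_self] at this
  | orI1 Γ i α β D ih =>
    intro Δ h
    exact SLT.orR1 i α β (ih Δ h)
  | orI2 Γ i α β D ih =>
    intro Δ h
    exact SLT.orR2 i α β (ih Δ h)
  | orE Γ₀ Γ₁ Γ₂ i α β γ D0 D1 D2 ih0 ih1 ih2 =>
    intro Δ h
    have h0 := ih0 Δ (fun x hx => h (Or.inl (Or.inl hx)))
    have h1 : SLT true (insert (Xpow i α) Δ) (some γ) := by
      apply ih1
      intro x hx
      by_cases hxa : x = Xpow i α
      · simp [hxa]
      · have := h (Or.inl (Or.inr ⟨hx, hxa⟩)); simp_all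
    have h2 : SLT true (insert (Xpow i β) Δ) (some γ) := by
      apply ih2
      intro x hx
      by_cases hxa : x = Xpow i β
      · simp [hxa]
      · have := h (Or.inr ⟨hx, hxa⟩); simp_all
    have := SLT.cut rfl h0 (SLT.orL i α β h1 h2)
    rwa [Finset.union_self] at this
  | GI Γs i α Dj ih =>
    intro Δ h
    exact SLT.GR i α (fun j => ih j Δ (fun x hx => h (Set.mem_iUnion.mpr ⟨j, hx⟩)))
  | GE Γ i k α D ih =>
    intro Δ h
    have := SLT.cut rfl (ih Δ h) (SLT.GL i k α (slt_ax α (i + k) Δ true))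
    rwa [Finset.union_self] at this
  | FI Γ i k α D ih =>
    intro Δ h
    exact SLT.FR i k α (ih Δ h)
  | FE Γ₀ Γs i α γ D0 Dj ih0 ihj =>
    intro Δ h
    have h0 := ih0 Δ (fun x hx => h (Or.inl hx))
    have p2 : SLT true (insert (Xpow i (Formula.F α)) Δ) (some γ) := by
      apply SLT.FL
      intro j
      apply ihj j
      intro x hx
      by_cases hxa : x = Xpow (i + j) α
      · simp [hxa]
      · have := h (Or.inr (Set.mem_iUnion.mpr ⟨j, ⟨hx, hxa⟩⟩)); simp_all
    have := SLT.cut rfl h0 p2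
    rwa [Finset.union_self] at this

/-- If `D` is an NLT_ω derivation with set of open assumptions `Γ` and end-formula `β`,
then the sequent `Γ ⇒ β` is derivable in SLT_ω. -/
theorem stmt8 (Γ : Finset Formula) (β : Formula) (D : ND (↑Γ : Set Formula) β) :
    SLT true Γ (some β) := by
  exact nd_to_slt D Γ (fun x hx => hx)
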